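/- Let d ≥ 1, k ≥ 1, and let T be a tree with vertex set {0, 1, …, k}. Let h : ℝ^d → [0,∞) be measurable with h(−x) = h(x) for all x and ∫_{ℝ^d} h(x) dx < ∞. Then for every fixed x_0 ∈ ℝ^d, ∫_{(ℝ^d)^k} ∏_{{i,j} ∈ E(T)} h(x_i − x_j) dx_1 ⋯ dx_k = (∫_{ℝ^d} h(x) dx)^k, where the integral is with respect to Lebesgue measure on (ℝ^d)^k. -/

import Mathlib

open MeasureTheory Finset
open scoped ENNReal

section GraphAux

variable {V : Type*} {W : Type*}

/-- Acyclicity pulls back along an injective graph homomorphism. -/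
lemma aux_isAcyclic_of_hom {G : SimpleGraph V} {H : SimpleGraph W} (f : G →g H)
    (hf : Function.Injective f) (h : H.IsAcyclic) : G.IsAcyclic := by
  refine SimpleGraph.isAcyclic_of_path_unique fun v w p q => ?_
  exact SimpleGraph.Path.map_injective hf v w
    (h.path_unique (p.map f hf) (q.map f hf))

/-- A graph isomorphic to a tree is a tree. -/
lemma aux_isTree_of_iso {G : SimpleGraph V} {H : SimpleGraph W} (e : G ≃g H)
    (h : H.IsTree) : G.IsTree := by
  constructor
  · exact e.connected_iff.mpr h.isConnected
  · exact aux_isAcyclic_of_hom e.toHom e.toEquiv.injective h.IsAcyclic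

/-- A tree with at least two vertices has a leaf distinct from any given vertex. -/
lemma aux_exists_leaf {V : Type*} [Fintype V] (G : SimpleGraph V) [DecidableRel G.Adj]
    (hG : G.IsTree) (h2 : 2 ≤ Fintype.card V) (v₀ : V) :
    ∃ ℓ, ℓ ≠ v₀ ∧ G.degree ℓ = 1 := by
  classical
  have hdegpos : ∀ v : V, 1 ≤ G.degree v := by
    intro v
    obtain ⟨w, hw⟩ := Fintype.exists_ne_of_one_lt_card h2 v
    obtain ⟨p⟩ := hG.isConnected.preconnected v w
    rw [show (1 : ℕ) ≤ G.degree v ↔ 0 < G.degree v from Iff.rfl,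
      SimpleGraph.degree_pos_iff_exists_adj]
    cases p with
    | nil => exact absurd rfl hw.symm
    | cons h q => exact ⟨_, h⟩
  by_contra hcon
  push_neg at hcon
  have hsum : ∑ v, G.degree v = 2 * G.edgeFinset.card :=
    SimpleGraph.sum_degrees_eq_twice_card_edges G
  have hcard : G.edgeFinset.card + 1 = Fintype.card V := hG.card_edgeFinset
  have h1 : ∀ v ∈ Finset.univ.erase v₀, 2 ≤ G.degree v := by
    intro v hv
    have hv' := Finset.ne_of_mem_erase hv
    have := hcon v hv'
    have := hdegpos v
    omega
  have h2' : (Finset.univ.erase v₀).card • 2 ≤ ∑ v ∈ Finset.univ.erase v₀, G.degree v :=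
    Finset.card_nsmul_le_sum _ _ _ h1
  have hsplit : ∑ v, G.degree v = G.degree v₀ + ∑ v ∈ Finset.univ.erase v₀, G.degree v :=
    (Finset.add_sum_erase _ _ (Finset.mem_univ v₀)).symm
  have hce : (Finset.univ.erase v₀).card = Fintype.card V - 1 := by
    rw [Finset.card_erase_of_mem (Finset.mem_univ v₀), Finset.card_univ]
  have := hdegpos v₀
  have hcV : Fintype.card V = G.edgeFinset.card + 1 := hcard.symm
  rw [hce, hcV] at h2'
  simp only [smul_eq_mul] at h2'
  omega

end GraphAux

section PairF

variable {d : ℕ}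

/-- The symmetric edge-weight function `e ↦ g (x i - x j)` for `e = s(i,j)`. -/
noncomputable def pairF (g : (Fin d → ℝ) → ℝ≥0∞) (hs : ∀ x, g (-x) = g x) {n : ℕ}
    (x : Fin n → Fin d → ℝ) : Sym2 (Fin n) → ℝ≥0∞ :=
  Sym2.lift ⟨fun i j => g (x i - x j), fun i j => by dsimp only; rw [← neg_sub (x i) (x j), hs]⟩

lemma pairF_mk (g : (Fin d → ℝ) → ℝ≥0∞) (hs : ∀ x, g (-x) = g x) {n : ℕ}
    (x : Fin n → Fin d → ℝ) (i j : Fin n) : pairF g hs x s(i, j) = g (x i - x j) := rfl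

lemma measurable_cons_apply {n : ℕ} (x₀ : Fin d → ℝ) (i : Fin (n + 1)) :
    Measurable (fun y : Fin n → Fin d → ℝ => (Fin.cons x₀ y : Fin (n+1) → Fin d → ℝ) i) := by
  refine Fin.cases ?_ ?_ i
  · simpa using measurable_const
  · intro j; simpa using measurable_pi_apply j

lemma measurable_prod_pairF (g : (Fin d → ℝ) → ℝ≥0∞) (hg : Measurable g)
    (hs : ∀ x, g (-x) = g x) {n : ℕ} (x₀ : Fin d → ℝ) (s : Finset (Sym2 (Fin (n + 1)))) :
    Measurable (fun y : Fin n → Fin d → ℝ =>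
      ∏ e ∈ s, pairF g hs (Fin.cons x₀ y : Fin (n+1) → Fin d → ℝ) e) := by
  refine Finset.measurable_prod _ (fun e _ => ?_)
  induction e using Sym2.ind with
  | _ i j =>
    simp only [pairF_mk]
    exact hg.comp ((measurable_cons_apply x₀ i).sub (measurable_cons_apply x₀ j))

lemma prod_pairs_eq (g : (Fin d → ℝ) → ℝ≥0∞) (hs : ∀ x, g (-x) = g x) {n : ℕ}
    (T : SimpleGraph (Fin n)) [DecidableRel T.Adj] (x : Fin n → Fin d → ℝ) :
    (∏ p ∈ Finset.univ.filter (fun p : Fin n × Fin n => p.1 < p.2 ∧ T.Adj p.1 p.2),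
      g (x p.1 - x p.2)) = ∏ e ∈ T.edgeFinset, pairF g hs x e := by
  refine Finset.prod_bij (fun p _ => s(p.1, p.2)) ?_ ?_ ?_ ?_
  · intro p hp; simp only [mem_filter] at hp
    rw [SimpleGraph.mem_edgeFinset, SimpleGraph.mem_edgeSet]; exact hp.2.2
  · rintro ⟨a, b⟩ hp ⟨c, e⟩ hq hpq
    simp only [mem_filter, mem_univ, true_and] at hp hq
    rw [Sym2.eq_iff] at hpq
    rcases hpq with ⟨h1, h2⟩ | ⟨h1, h2⟩
    · exact Prod.ext h1 h2
    · exfalso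
      dsimp only at h1 h2
      subst h1; subst h2
      exact absurd (hp.1.trans hq.1) (lt_irrefl _)
  · intro e he
    induction e using Sym2.ind with
    | _ a b =>
      rw [SimpleGraph.mem_edgeFinset, SimpleGraph.mem_edgeSet] at he
      rcases lt_or_gt_of_ne he.ne with hlt | hgt
      · exact ⟨(a, b), Finset.mem_filter.mpr ⟨Finset.mem_univ _, hlt, he⟩, rfl⟩
      · exact ⟨(b, a), Finset.mem_filter.mpr ⟨Finset.mem_univ _, hgt, he.symm⟩, Sym2.eq_swap⟩
  · intro p hp; rw [pairF_mk]

end PairF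

section Key

variable {d : ℕ}

theorem key_lintegral (g : (Fin d → ℝ) → ℝ≥0∞) (hg : Measurable g)
    (hs : ∀ x, g (-x) = g x) :
    ∀ (k : ℕ) (T : SimpleGraph (Fin (k + 1))) [DecidableRel T.Adj], T.IsTree →
      ∀ x₀ : Fin d → ℝ,
      (∫⁻ y : Fin k → Fin d → ℝ,
        ∏ e ∈ T.edgeFinset, pairF g hs (Fin.cons x₀ y : Fin (k+1) → Fin d → ℝ) e)
        = (∫⁻ x, g x) ^ k := by
  intro k
  induction k with
  | zero =>
    intro T instT hT x₀
    have hempty : T.edgeFinset = ∅ := by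
      ext e
      induction e using Sym2.ind with
      | _ a b =>
        simp only [Finset.notMem_empty, iff_false, SimpleGraph.mem_edgeFinset,
          SimpleGraph.mem_edgeSet]
        rw [show a = b from Fin.ext (by omega)]
        exact T.irrefl
    rw [hempty]
    simp only [Finset.prod_empty, pow_zero, lintegral_one]
    rw [show (volume : Measure (Fin 0 → Fin d → ℝ)) = Measure.pi (fun _ => volume) from rfl,
      Measure.pi_univ]
    simp
  | succ k IH =>
    intro T instT hT x₀
    -- find a leaf distinct from 0
    have h2 : 2 ≤ Fintype.card (Fin (k + 2)) := by simp
    obtain ⟨ℓ, hℓ0, hdegℓ⟩ := aux_exists_leaf T hT h2 0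
    obtain ⟨m₀, hm₀⟩ : ∃ m₀, ∀ x, T.Adj ℓ x ↔ x = m₀ := by
      obtain ⟨m₀, hm₀⟩ := Finset.card_eq_one.mp hdegℓ
      exact ⟨m₀, fun x => by
        rw [← SimpleGraph.mem_neighborFinset, hm₀, Finset.mem_singleton]⟩
    set L : Fin (k + 2) := Fin.last (k + 1) with hLdef
    have hL0 : L ≠ 0 := Fin.last_pos'.ne'
    set σ : Equiv.Perm (Fin (k + 2)) := Equiv.swap ℓ L with hσdef
    have hσ0 : σ 0 = 0 := Equiv.swap_apply_of_ne_of_ne (Ne.symm hℓ0) (Ne.symm hL0)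
    set T' : SimpleGraph (Fin (k + 2)) := SimpleGraph.comap σ T with hT'def
    haveI instT' : DecidableRel T'.Adj := fun a b => instT (σ a) (σ b)
    have isoT : T' ≃g T := ⟨σ, Iff.rfl⟩
    have hT' : T'.IsTree := aux_isTree_of_iso isoT hT
    set m : Fin (k + 2) := σ m₀ with hmdef
    have hσσ : ∀ x, σ (σ x) = x := fun x => Equiv.swap_apply_self _ _ x
    have hadj' : ∀ x, T'.Adj L x ↔ x = m := by
      intro x
      show T.Adj (σ L) (σ x) ↔ x = m
      rw [show σ L = ℓ from Equiv.swap_apply_right ℓ L, hm₀ (σ x)]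
      constructor
      · intro h; rw [← hσσ x, h]
      · intro h; rw [h, hmdef, hσσ]
    have hmL : m ≠ L := by
      intro h
      exact T'.irrefl ((hadj' L).mpr h.symm)
    -- Step C: relabel so that the leaf is the last vertex
    set a0 : Fin (k + 1) := ℓ.pred hℓ0 with ha0def
    set b0 : Fin (k + 1) := Fin.last k with hb0def
    have ha0succ : Fin.succ a0 = ℓ := Fin.succ_pred ℓ hℓ0
    have hb0succ : Fin.succ b0 = L := Fin.succ_last k
    set τ : Equiv.Perm (Fin (k + 1)) := Equiv.swap a0 b0 with hτdef
    have hστ : ∀ i : Fin (k + 1), σ (Fin.succ i) = Fin.succ (τ i) := by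
      intro i
      by_cases hia : i = a0
      · subst hia
        rw [ha0succ, hσdef, hτdef, Equiv.swap_apply_left, Equiv.swap_apply_left, hb0succ]
      · by_cases hib : i = b0
        · subst hib
          rw [hb0succ, hσdef, hτdef, Equiv.swap_apply_right, Equiv.swap_apply_right, ha0succ]
        · have h1 : Fin.succ i ≠ ℓ := fun h => hia (by rw [← ha0succ] at h; exact Fin.succ_injective _ h)
          have h2 : Fin.succ i ≠ L := fun h => hib (by rw [← hb0succ] at h; exact Fin.succ_injective _ h)
          rw [hσdef, hτdef, Equiv.swap_apply_of_ne_of_ne h1 h2,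
            Equiv.swap_apply_of_ne_of_ne hia hib]
    have hcomp : ∀ y : Fin (k + 1) → Fin d → ℝ,
        (Fin.cons x₀ y : Fin (k+2) → Fin d → ℝ) ∘ σ
          = (Fin.cons x₀ (y ∘ τ) : Fin (k+2) → Fin d → ℝ) := by
      intro y
      funext i
      refine Fin.cases ?_ ?_ i
      · show (Fin.cons x₀ y : Fin (k+2) → Fin d → ℝ) (σ 0) = _
        rw [hσ0]; simp
      · intro j
        show (Fin.cons x₀ y : Fin (k+2) → Fin d → ℝ) (σ (Fin.succ j)) = _
        rw [hστ j]; simp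
    have hmemT' : ∀ e : Sym2 (Fin (k + 2)), e ∈ T'.edgeSet ↔ Sym2.map σ e ∈ T.edgeSet := by
      intro e
      induction e using Sym2.ind with
      | _ a b => simp only [Sym2.map_pair_eq, SimpleGraph.mem_edgeSet]; exact Iff.rfl
    have hmapinv : ∀ e : Sym2 (Fin (k + 2)), Sym2.map σ (Sym2.map σ e) = e := by
      intro e
      induction e using Sym2.ind with
      | _ a b => simp [Sym2.map_pair_eq, hσσ]
    have hedges : T'.edgeFinset = T.edgeFinset.image (Sym2.map σ) := by
      ext e
      simp only [Finset.mem_image, SimpleGraph.mem_edgeFinset]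
      constructor
      · intro he
        exact ⟨Sym2.map σ e, (hmemT' e).mp he, hmapinv e⟩
      · rintro ⟨e', he', rfl⟩
        rw [hmemT', hmapinv]
        exact he'
    have hprodT' : ∀ x : Fin (k + 2) → Fin d → ℝ,
        (∏ e ∈ T'.edgeFinset, pairF g hs x e)
          = ∏ e ∈ T.edgeFinset, pairF g hs (x ∘ σ) e := by
      intro x
      rw [hedges, Finset.prod_image (fun e1 _ e2 _ h => by
        rw [← hmapinv e1, h, hmapinv])]
      refine Finset.prod_congr rfl fun e _ => ?_
      induction e using Sym2.ind with
      | _ a b => rw [Sym2.map_pair_eq, pairF_mk, pairF_mk]; rfl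
    have hmeasT : Measurable (fun y : Fin (k + 1) → Fin d → ℝ =>
        ∏ e ∈ T.edgeFinset, pairF g hs (Fin.cons x₀ y : Fin (k+2) → Fin d → ℝ) e) :=
      measurable_prod_pairF g hg hs x₀ _
    have hmp : MeasurePreserving (fun y : Fin (k + 1) → Fin d → ℝ => y ∘ τ) volume volume := by
      have h1 := MeasurePreserving.symm _
        (volume_measurePreserving_piCongrLeft (fun _ : Fin (k + 1) => (Fin d → ℝ)) τ)
      have h2 : ⇑(MeasurableEquiv.piCongrLeft (fun _ : Fin (k + 1) => (Fin d → ℝ)) τ).symm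
          = fun y : Fin (k + 1) → Fin d → ℝ => y ∘ τ := by
        funext y
        rfl
      rwa [h2] at h1
    have stepC : (∫⁻ y : Fin (k + 1) → Fin d → ℝ,
          ∏ e ∈ T.edgeFinset, pairF g hs (Fin.cons x₀ y : Fin (k+2) → Fin d → ℝ) e)
        = ∫⁻ y : Fin (k + 1) → Fin d → ℝ,
          ∏ e ∈ T'.edgeFinset, pairF g hs (Fin.cons x₀ y : Fin (k+2) → Fin d → ℝ) e := by
      have hcongr : (∫⁻ y : Fin (k + 1) → Fin d → ℝ,
            ∏ e ∈ T'.edgeFinset, pairF g hs (Fin.cons x₀ y : Fin (k+2) → Fin d → ℝ) e)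
          = ∫⁻ y : Fin (k + 1) → Fin d → ℝ,
            ∏ e ∈ T.edgeFinset, pairF g hs (Fin.cons x₀ (y ∘ τ) : Fin (k+2) → Fin d → ℝ) e :=
        lintegral_congr fun y => by rw [hprodT', hcomp y]
      rw [hcongr]
      exact (hmp.lintegral_comp hmeasT).symm
    -- Step E: the tree with the leaf removed
    set T'' : SimpleGraph (Fin (k + 1)) := SimpleGraph.comap Fin.castSucc T' with hT''def
    haveI instT'' : DecidableRel T''.Adj := fun a b => instT' _ _
    have hcastinj : Function.Injective (Fin.castSucc : Fin (k + 1) → Fin (k + 2)) :=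
      Fin.castSucc_injective _
    have hSym2inj : Function.Injective (Sym2.map (Fin.castSucc : Fin (k + 1) → Fin (k + 2))) :=
      Sym2.map.injective hcastinj
    have hcastne : ∀ i : Fin (k + 1), Fin.castSucc i ≠ L := fun i => (Fin.castSucc_lt_last i).ne
    have hdecomp : T'.edgeFinset
        = insert s(m, L) (T''.edgeFinset.image (Sym2.map Fin.castSucc)) := by
      ext e
      simp only [Finset.mem_insert, Finset.mem_image, SimpleGraph.mem_edgeFinset]
      constructor
      · intro he
        induction e using Sym2.ind with
        | _ a b =>
          have hab : T'.Adj a b := (T'.mem_edgeSet).mp he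
          by_cases haL : a = L
          · left
            subst haL
            rw [(hadj' b).mp hab, Sym2.eq_swap]
          · by_cases hbL : b = L
            · left
              subst hbL
              rw [(hadj' a).mp hab.symm]
            · right
              refine ⟨s(a.castPred haL, b.castPred hbL), ?_, ?_⟩
              · rw [SimpleGraph.mem_edgeSet]
                show T'.Adj _ _
                rw [Fin.castSucc_castPred, Fin.castSucc_castPred]
                exact hab
              · rw [Sym2.map_pair_eq, Fin.castSucc_castPred, Fin.castSucc_castPred]
      · intro h
        rcases h with h | ⟨e', he', heq⟩
        · rw [h]
          exact (T'.mem_edgeSet).mpr ((hadj' m).mpr rfl).symm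
        · rw [← heq]
          induction e' using Sym2.ind with
          | _ a b =>
            rw [Sym2.map_pair_eq]
            exact (T'.mem_edgeSet).mpr ((T''.mem_edgeSet).mp he')
    have hnotmem : s(m, L) ∉ T''.edgeFinset.image (Sym2.map Fin.castSucc) := by
      simp only [Finset.mem_image]
      rintro ⟨e', he', heq⟩
      induction e' using Sym2.ind with
      | _ a b =>
        rw [Sym2.map_pair_eq, Sym2.eq_iff] at heq
        rcases heq with ⟨h1, h2⟩ | ⟨h1, h2⟩
        · exact hcastne b h2
        · exact hcastne a h1
    have hcardT' : T'.edgeFinset.card + 1 = k + 2 := by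
      have := hT'.card_edgeFinset
      simpa using this
    have hcardT'' : T''.edgeFinset.card + 1 = k + 1 := by
      rw [hdecomp, Finset.card_insert_of_notMem hnotmem,
        Finset.card_image_of_injective _ hSym2inj] at hcardT'
      omega
    have hreach : ∀ (n : ℕ) (a b : Fin (k + 2)) (w : T'.Walk a b), w.length ≤ n →
        ∀ (ha : a ≠ L) (hb : b ≠ L), T''.Reachable (a.castPred ha) (b.castPred hb) := by
      intro n
      induction n with
      | zero =>
        intro a b w hw ha hb
        cases w with
        | nil => exact SimpleGraph.Reachable.refl _
        | cons h p => simp [SimpleGraph.Walk.length_cons] at hw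
      | succ n IHn =>
        intro a b w hw ha hb
        cases w with
        | nil => exact SimpleGraph.Reachable.refl _
        | @cons _ c _ hadj p =>
          by_cases hc : c = L
          · subst hc
            cases p with
            | nil => exact absurd rfl hb
            | @cons _ c' _ hadj2 p2 =>
              have ham : a = m := (hadj' a).mp hadj.symm
              have hc'm : c' = m := (hadj' c').mp hadj2
              have hac' : a = c' := ham.trans hc'm.symm
              subst hac'
              have hlen : p2.length ≤ n := by
                simp only [SimpleGraph.Walk.length_cons] at hw
                omega
              exact IHn a b p2 hlen ha hb
          · have hadj'' : T''.Adj (a.castPred ha) (c.castPred hc) := by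
              show T'.Adj _ _
              rw [Fin.castSucc_castPred, Fin.castSucc_castPred]
              exact hadj
            have hlen : p.length ≤ n := by
              simp only [SimpleGraph.Walk.length_cons] at hw
              omega
            exact hadj''.reachable.trans (IHn c b p hlen hc hb)
    have hconn'' : T''.Connected := by
      rw [SimpleGraph.connected_iff]
      refine ⟨fun a b => ?_, ⟨0⟩⟩
      obtain ⟨w⟩ := hT'.isConnected.preconnected a.castSucc b.castSucc
      have := hreach w.length _ _ w le_rfl (hcastne a) (hcastne b)
      simpa [Fin.castPred_castSucc] using this
    have hT''tree : T''.IsTree :=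
      ⟨hconn'', aux_isAcyclic_of_hom ⟨Fin.castSucc, fun h => h⟩ hcastinj hT'.IsAcyclic⟩
    -- Step D/F: split off the last coordinate and integrate out the leaf
    set m' : Fin (k + 1) := m.castPred hmL with hm'def
    have hXcast : ∀ (y' : Fin k → Fin d → ℝ) (z : Fin d → ℝ) (i : Fin (k + 1)),
        (Fin.cons x₀ (Fin.snoc y' z) : Fin (k+2) → Fin d → ℝ) (Fin.castSucc i)
          = (Fin.cons x₀ y' : Fin (k+1) → Fin d → ℝ) i := by
      intro y' z i
      refine Fin.cases ?_ ?_ i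
      · simp
      · intro j
        rw [show Fin.castSucc (Fin.succ j) = Fin.succ (Fin.castSucc j) from
          (Fin.succ_castSucc j).symm]
        simp
    have hXlast : ∀ (y' : Fin k → Fin d → ℝ) (z : Fin d → ℝ),
        (Fin.cons x₀ (Fin.snoc y' z) : Fin (k+2) → Fin d → ℝ) L = z := by
      intro y' z
      rw [hLdef, ← Fin.succ_last, Fin.cons_succ, Fin.snoc_last]
    have hFsnoc : ∀ (y' : Fin k → Fin d → ℝ) (z : Fin d → ℝ),
        (∏ e ∈ T'.edgeFinset,
            pairF g hs (Fin.cons x₀ (Fin.snoc y' z) : Fin (k+2) → Fin d → ℝ) e)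
          = g ((Fin.cons x₀ y' : Fin (k+1) → Fin d → ℝ) m' - z)
            * ∏ e ∈ T''.edgeFinset,
                pairF g hs (Fin.cons x₀ y' : Fin (k+1) → Fin d → ℝ) e := by
      intro y' z
      rw [hdecomp, Finset.prod_insert hnotmem,
        Finset.prod_image (fun e1 _ e2 _ h => hSym2inj h)]
      congr 1
      · rw [pairF_mk, hXlast]
        congr 2
        rw [show m = Fin.castSucc m' from (Fin.castSucc_castPred m hmL).symm, hXcast]
      · refine Finset.prod_congr rfl fun e _ => ?_
        induction e using Sym2.ind with
        | _ a b => rw [Sym2.map_pair_eq, pairF_mk, pairF_mk, hXcast, hXcast]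
    have hmeasT' : Measurable (fun y : Fin (k + 1) → Fin d → ℝ =>
        ∏ e ∈ T'.edgeFinset, pairF g hs (Fin.cons x₀ y : Fin (k+2) → Fin d → ℝ) e) :=
      measurable_prod_pairF g hg hs x₀ _
    have hmp2 : MeasurePreserving
        ((MeasurableEquiv.piFinSuccAbove (fun _ : Fin (k + 1) => (Fin d → ℝ))
          (Fin.last k)).symm)
        ((volume : Measure (Fin d → ℝ)).prod (volume : Measure (Fin k → Fin d → ℝ)))
        volume := by
      refine MeasurePreserving.symm _ ?_
      exact volume_preserving_piFinSuccAbove (fun _ : Fin (k + 1) => (Fin d → ℝ)) (Fin.last k)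
    have hesymm : ∀ p : (Fin d → ℝ) × (Fin k → Fin d → ℝ),
        (MeasurableEquiv.piFinSuccAbove (fun _ : Fin (k + 1) => (Fin d → ℝ))
          (Fin.last k)).symm p = Fin.snoc p.2 p.1 := by
      intro p
      show (Fin.insertNthEquiv (fun _ : Fin (k+1) => (Fin d → ℝ)) (Fin.last k)) p
        = Fin.snoc p.2 p.1
      exact Fin.insertNth_last' p.1 p.2
    have hmeasp : Measurable (fun p : (Fin d → ℝ) × (Fin k → Fin d → ℝ) =>
        ∏ e ∈ T'.edgeFinset,
          pairF g hs (Fin.cons x₀ (Fin.snoc p.2 p.1) : Fin (k+2) → Fin d → ℝ) e) := by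
      have hfun : (fun p : (Fin d → ℝ) × (Fin k → Fin d → ℝ) =>
          ∏ e ∈ T'.edgeFinset,
            pairF g hs (Fin.cons x₀ (Fin.snoc p.2 p.1) : Fin (k+2) → Fin d → ℝ) e)
          = (fun y : Fin (k + 1) → Fin d → ℝ =>
              ∏ e ∈ T'.edgeFinset, pairF g hs (Fin.cons x₀ y : Fin (k+2) → Fin d → ℝ) e)
            ∘ ⇑(MeasurableEquiv.piFinSuccAbove (fun _ : Fin (k + 1) => (Fin d → ℝ))
                (Fin.last k)).symm := by
        funext p
        rw [Function.comp_apply, hesymm p]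
      rw [hfun]
      exact hmeasT'.comp (MeasurableEquiv.measurable _)
    have stepD : (∫⁻ y : Fin (k + 1) → Fin d → ℝ,
          ∏ e ∈ T'.edgeFinset, pairF g hs (Fin.cons x₀ y : Fin (k+2) → Fin d → ℝ) e)
        = ∫⁻ z : Fin d → ℝ, ∫⁻ y' : Fin k → Fin d → ℝ,
            ∏ e ∈ T'.edgeFinset,
              pairF g hs (Fin.cons x₀ (Fin.snoc y' z) : Fin (k+2) → Fin d → ℝ) e := by
      rw [← hmp2.lintegral_comp hmeasT']
      have hcg : (∫⁻ p : (Fin d → ℝ) × (Fin k → Fin d → ℝ),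
            (∏ e ∈ T'.edgeFinset, pairF g hs (Fin.cons x₀
              ((MeasurableEquiv.piFinSuccAbove (fun _ : Fin (k + 1) => (Fin d → ℝ))
                (Fin.last k)).symm p) : Fin (k+2) → Fin d → ℝ) e)
              ∂((volume : Measure (Fin d → ℝ)).prod (volume : Measure (Fin k → Fin d → ℝ))))
          = ∫⁻ p : (Fin d → ℝ) × (Fin k → Fin d → ℝ),
            (∏ e ∈ T'.edgeFinset,
              pairF g hs (Fin.cons x₀ (Fin.snoc p.2 p.1) : Fin (k+2) → Fin d → ℝ) e)
              ∂((volume : Measure (Fin d → ℝ)).prod (volume : Measure (Fin k → Fin d → ℝ))) :=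
        lintegral_congr fun p => by rw [hesymm p]
      rw [hcg]
      rw [MeasureTheory.lintegral_prod _ hmeasp.aemeasurable]
    have hswap : (∫⁻ z : Fin d → ℝ, ∫⁻ y' : Fin k → Fin d → ℝ,
          ∏ e ∈ T'.edgeFinset,
            pairF g hs (Fin.cons x₀ (Fin.snoc y' z) : Fin (k+2) → Fin d → ℝ) e)
        = ∫⁻ y' : Fin k → Fin d → ℝ, ∫⁻ z : Fin d → ℝ,
          ∏ e ∈ T'.edgeFinset,
            pairF g hs (Fin.cons x₀ (Fin.snoc y' z) : Fin (k+2) → Fin d → ℝ) e :=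
      lintegral_lintegral_swap hmeasp.aemeasurable
    have hinner : ∀ y' : Fin k → Fin d → ℝ,
        (∫⁻ z : Fin d → ℝ,
          ∏ e ∈ T'.edgeFinset,
            pairF g hs (Fin.cons x₀ (Fin.snoc y' z) : Fin (k+2) → Fin d → ℝ) e)
        = (∫⁻ x, g x) * ∏ e ∈ T''.edgeFinset,
            pairF g hs (Fin.cons x₀ y' : Fin (k+1) → Fin d → ℝ) e := by
      intro y'
      have hmz : Measurable fun z : Fin d → ℝ =>
          g ((Fin.cons x₀ y' : Fin (k+1) → Fin d → ℝ) m' - z) :=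
        hg.comp (measurable_const.sub measurable_id)
      rw [lintegral_congr (fun z => hFsnoc y' z), lintegral_mul_const _ hmz]
      congr 1
      exact (Measure.measurePreserving_sub_left volume _).lintegral_comp hg
    calc (∫⁻ y : Fin (k + 1) → Fin d → ℝ,
          ∏ e ∈ T.edgeFinset, pairF g hs (Fin.cons x₀ y : Fin (k+2) → Fin d → ℝ) e)
        = ∫⁻ y : Fin (k + 1) → Fin d → ℝ,
            ∏ e ∈ T'.edgeFinset, pairF g hs (Fin.cons x₀ y : Fin (k+2) → Fin d → ℝ) e :=
          stepC
      _ = ∫⁻ z : Fin d → ℝ, ∫⁻ y' : Fin k → Fin d → ℝ,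
            ∏ e ∈ T'.edgeFinset,
              pairF g hs (Fin.cons x₀ (Fin.snoc y' z) : Fin (k+2) → Fin d → ℝ) e := stepD
      _ = ∫⁻ y' : Fin k → Fin d → ℝ, ∫⁻ z : Fin d → ℝ,
            ∏ e ∈ T'.edgeFinset,
              pairF g hs (Fin.cons x₀ (Fin.snoc y' z) : Fin (k+2) → Fin d → ℝ) e := hswap
      _ = ∫⁻ y' : Fin k → Fin d → ℝ, (∫⁻ x, g x) * ∏ e ∈ T''.edgeFinset,
              pairF g hs (Fin.cons x₀ y' : Fin (k+1) → Fin d → ℝ) e := lintegral_congr hinner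
      _ = (∫⁻ x, g x) * ∫⁻ y' : Fin k → Fin d → ℝ, ∏ e ∈ T''.edgeFinset,
              pairF g hs (Fin.cons x₀ y' : Fin (k+1) → Fin d → ℝ) e :=
          lintegral_const_mul _ (measurable_prod_pairF g hg hs x₀ _)
      _ = (∫⁻ x, g x) * (∫⁻ x, g x) ^ k := by rw [IH T'' hT''tree x₀]
      _ = (∫⁻ x, g x) ^ (k + 1) := (mul_comm _ _).trans (pow_succ _ _).symm

end Key

theorem statement15 (d k : ℕ) (hd : 1 ≤ d) (hk : 1 ≤ k)
    (T : SimpleGraph (Fin (k + 1))) [DecidableRel T.Adj] (hT : T.IsTree)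
    (h : (Fin d → ℝ) → ℝ) (hmeas : Measurable h) (hnonneg : ∀ x, 0 ≤ h x)
    (heven : ∀ x, h (-x) = h x) (hint : Integrable h)
    (x₀ : Fin d → ℝ) :
    (∫ y : Fin k → Fin d → ℝ,
        ∏ p ∈ Finset.univ.filter
            (fun p : Fin (k + 1) × Fin (k + 1) => p.1 < p.2 ∧ T.Adj p.1 p.2),
          h ((Fin.cons x₀ y : Fin (k + 1) → Fin d → ℝ) p.1
              - (Fin.cons x₀ y : Fin (k + 1) → Fin d → ℝ) p.2))
      = (∫ x : Fin d → ℝ, h x) ^ k := by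
  set g : (Fin d → ℝ) → ℝ≥0∞ := fun x => ENNReal.ofReal (h x) with hgdef
  have hgm : Measurable g := ENNReal.measurable_ofReal.comp hmeas
  have hgs : ∀ x, g (-x) = g x := fun x => by rw [hgdef]; simp [heven]
  have hfm : Measurable (fun y : Fin k → Fin d → ℝ =>
      ∏ p ∈ Finset.univ.filter
          (fun p : Fin (k + 1) × Fin (k + 1) => p.1 < p.2 ∧ T.Adj p.1 p.2),
        h ((Fin.cons x₀ y : Fin (k + 1) → Fin d → ℝ) p.1
            - (Fin.cons x₀ y : Fin (k + 1) → Fin d → ℝ) p.2)) :=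
    Finset.measurable_prod _ fun p _ =>
      hmeas.comp ((measurable_cons_apply x₀ p.1).sub (measurable_cons_apply x₀ p.2))
  have hnn : ∀ y : Fin k → Fin d → ℝ,
      0 ≤ ∏ p ∈ Finset.univ.filter
          (fun p : Fin (k + 1) × Fin (k + 1) => p.1 < p.2 ∧ T.Adj p.1 p.2),
        h ((Fin.cons x₀ y : Fin (k + 1) → Fin d → ℝ) p.1
            - (Fin.cons x₀ y : Fin (k + 1) → Fin d → ℝ) p.2) :=
    fun y => Finset.prod_nonneg fun p _ => hnonneg _
  rw [MeasureTheory.integral_eq_lintegral_of_nonneg_ae (Filter.Eventually.of_forall hnn)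
    hfm.aestronglyMeasurable]
  have hRHS : (∫ x : Fin d → ℝ, h x) = (∫⁻ x, g x).toReal := by
    rw [MeasureTheory.integral_eq_lintegral_of_nonneg_ae (Filter.Eventually.of_forall hnonneg)
      hmeas.aestronglyMeasurable]
  rw [hRHS, ← ENNReal.toReal_pow]
  congr 1
  have h1 : ∀ y : Fin k → Fin d → ℝ,
      ENNReal.ofReal (∏ p ∈ Finset.univ.filter
          (fun p : Fin (k + 1) × Fin (k + 1) => p.1 < p.2 ∧ T.Adj p.1 p.2),
        h ((Fin.cons x₀ y : Fin (k + 1) → Fin d → ℝ) p.1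
            - (Fin.cons x₀ y : Fin (k + 1) → Fin d → ℝ) p.2))
        = ∏ e ∈ T.edgeFinset, pairF g hgs (Fin.cons x₀ y : Fin (k+1) → Fin d → ℝ) e := by
    intro y
    rw [ENNReal.ofReal_prod_of_nonneg (fun p _ => hnonneg _)]
    exact prod_pairs_eq g hgs T (Fin.cons x₀ y)
  rw [lintegral_congr h1]
  exact key_lintegral g hgm hgs k T hT x₀
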